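/- Let (e, f, u) be a fluid model solution. Then each component u_i is 1-Lipschitz, i.e. |u_i(t) − u_i(s)| ≤ |t − s| for all s, t ≥ 0 and all i, and the functions e and f are Lipschitz continuous on [0,∞): there exists a constant L > 0 such that |e_{ij}(t) − e_{ij}(s)| ≤ L|t − s| and |f_{ij}(t) − f_{ij}(s)| ≤ L|t − s| for all i,j and all s, t ≥ 0. -/

import Mathlib

open Finset Filter Topology MeasureTheory intervalIntegral

abbrev Mat (r : ℕ) := Fin r → Fin r → ℝ

structure NetParams (r : ℕ) where
  lam : Fin r → ℝ
  mu : Mat r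
  P : Mat r
  lam_pos : ∀ i, 0 < lam i
  mu_pos : ∀ i j, 0 < mu i j
  P_nonneg : ∀ i j, 0 ≤ P i j
  P_rowsum : ∀ i, ∑ j, P i j = 1

def IsRouting {r : ℕ} (q : Mat r) : Prop :=
  (∀ i j, 0 ≤ q i j) ∧ ∀ i, ∑ j, q i j = 1

def MemT {r : ℕ} (e f : Mat r) : Prop :=
  (∀ i j, e i j ∈ Set.Icc (0:ℝ) 1) ∧ (∀ i j, f i j ∈ Set.Icc (0:ℝ) 1) ∧
    (∑ i, ∑ j, (e i j + f i j)) = 1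

open scoped Classical in
/-- The Lebesgue–Stieltjes measure associated with a non-decreasing `g : ℝ → ℝ`
(junk value `0` if `g` is not monotone). -/
noncomputable def lsMeasure (g : ℝ → ℝ) : Measure ℝ :=
  if h : Monotone g then h.stieltjesFunction.measure else 0

/-- A fluid model solution `(e, f, u)` for the ridesharing network with static
routing matrix `Q`.  All functions are defined on `ℝ`, but only their values
on `[0, ∞)` are relevant; `u` is extended by `0` on `(-∞, 0]`. -/
structure IsFluidSol {r : ℕ} (np : NetParams r) (Q : Mat r) (e f : ℝ → Mat r)
    (u : ℝ → Fin r → ℝ) : Prop where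
  cont_e : ∀ i j, ContinuousOn (fun t => e t i j) (Set.Ici 0)
  cont_f : ∀ i j, ContinuousOn (fun t => f t i j) (Set.Ici 0)
  mem_T : ∀ t, 0 ≤ t → MemT (e t) (f t)
  u_nonneg : ∀ t i, 0 ≤ u t i
  u_mono : ∀ i, Monotone fun t => u t i
  u_zero : ∀ i, ∀ t ≤ (0:ℝ), u t i = 0
  eq_f : ∀ i j, ∀ t, 0 ≤ t →
    f t i j = f 0 i j + np.lam i * np.P i j * (t - u t i)
      - np.mu i j * ∫ s in (0:ℝ)..t, f s i j
  eq_e_off : ∀ i j, i ≠ j → ∀ t, 0 ≤ t →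
    e t i j = e 0 i j - np.mu i j * (∫ s in (0:ℝ)..t, e s i j)
      + Q i j * ∑ k, np.mu k i * ∫ s in (0:ℝ)..t, f s k i
  eq_e_diag : ∀ i, ∀ t, 0 ≤ t →
    e t i i = e 0 i i - np.lam i * (t - u t i)
      + (∑ j ∈ Finset.univ.filter (fun j => j ≠ i), np.mu j i * ∫ s in (0:ℝ)..t, e s j i)
      + Q i i * ∑ j, np.mu j i * ∫ s in (0:ℝ)..t, f s j i
  compl : ∀ i, ∫⁻ s in Set.Ici (0:ℝ),
      ENNReal.ofReal (e s i i) ∂(lsMeasure fun t => u t i) = 0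

open scoped Classical in
/-- The equilibrium set ℰ associated to the routing matrix `Q`. -/
noncomputable def eqSet {r : ℕ} (np : NetParams r) (Q : Mat r) : Set (Mat r × Mat r) :=
  {p | MemT p.1 p.2 ∧ ∃ a : Fin r → ℝ, (∀ i, 0 ≤ a i ∧ a i ≤ 1) ∧
    (∀ i j, np.lam i * np.P i j * a i = np.mu i j * p.2 i j) ∧
    (∀ i j, i ≠ j → np.mu i j * p.1 i j = Q i j * ∑ k, np.mu k i * p.2 k i) ∧
    (∀ i, np.lam i * a i =
      (∑ k ∈ Finset.univ.filter (fun k => k ≠ i), np.mu k i * p.1 k i)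
        + Q i i * ∑ k, np.mu k i * p.2 k i) ∧
    (∀ i, (1 - a i) * p.1 i i = 0)}

/- ### Auxiliary lemmas -/

lemma prim_cont (h : ℝ → ℝ) (hc : Continuous h) :
    Continuous (fun t => ∫ x in (0:ℝ)..t, h x) :=
  intervalIntegral.continuous_primitive (fun a b => hc.intervalIntegrable a b) 0

lemma int_sub (h : ℝ → ℝ) (hc : Continuous h) (s t : ℝ) :
    (∫ x in (0:ℝ)..t, h x) - ∫ x in (0:ℝ)..s, h x = ∫ x in s..t, h x :=
  intervalIntegral.integral_interval_sub_left (hc.intervalIntegrable _ _) (hc.intervalIntegrable _ _)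

lemma int_abs_le (h : ℝ → ℝ) (h01 : ∀ x, h x ∈ Set.Icc (0:ℝ) 1) (s t : ℝ) :
    |∫ x in s..t, h x| ≤ |t - s| := by
  have := intervalIntegral.norm_integral_le_of_norm_le_const (C := 1) (f := h) (a := s) (b := t)
    (fun x _ => by
      have h1 := (h01 x).1; have h2 := (h01 x).2
      rw [Real.norm_eq_abs, abs_le]; constructor <;> linarith)
  simpa using this

lemma prim_mono (h : ℝ → ℝ) (hc : Continuous h) (hnn : ∀ x, 0 ≤ h x) {a b : ℝ} (hab : a ≤ b) :
    (∫ x in (0:ℝ)..a, h x) ≤ ∫ x in (0:ℝ)..b, h x := by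
  have h1 := int_sub h hc a b
  have h2 : 0 ≤ ∫ x in a..b, h x := intervalIntegral.integral_nonneg hab (fun x _ => hnn x)
  linarith

lemma abs_est2 (c q x z : ℝ) (hc : 0 ≤ c) (hq : 0 ≤ q) :
    |-(c * x) + q * z| ≤ c * |x| + q * |z| := by
  have h1 := abs_add_le (-(c * x)) (q * z)
  rw [abs_neg, abs_mul, abs_mul, abs_of_nonneg hc, abs_of_nonneg hq] at h1
  exact h1

lemma abs_est3 (c q x y z : ℝ) (hc : 0 ≤ c) (hq : 0 ≤ q) :
    |-(c * x) + y + q * z| ≤ c * |x| + |y| + q * |z| := by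
  have h1 := abs_add_le (-(c * x) + y) (q * z)
  have h2 := abs_add_le (-(c * x)) y
  rw [abs_neg, abs_mul, abs_of_nonneg hc] at h2
  rw [abs_mul, abs_of_nonneg hq] at h1
  linarith

lemma abs_estf (c m x z : ℝ) (hc : 0 ≤ c) (hm : 0 ≤ m) :
    |c * x - m * z| ≤ c * |x| + m * |z| := by
  have h1 := abs_add_le (c * x) (-(m * z))
  rw [abs_neg, abs_mul, abs_mul, abs_of_nonneg hc, abs_of_nonneg hm] at h1
  rw [sub_eq_add_neg]
  exact h1

lemma symm_reduce (g : ℝ → ℝ) (hg : ∀ s t : ℝ, 0 ≤ s → s ≤ t → |g t - g s| ≤ t - s) :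
    ∀ s t : ℝ, 0 ≤ s → 0 ≤ t → |g t - g s| ≤ |t - s| := by
  intro s t hs ht
  rcases le_total s t with h | h
  · calc |g t - g s| ≤ t - s := hg s t hs h
      _ ≤ |t - s| := le_abs_self _
  · calc |g t - g s| = |g s - g t| := abs_sub_comm _ _
      _ ≤ s - t := hg t s ht h
      _ = |t - s| := by rw [abs_sub_comm, abs_of_nonneg (by linarith)]

/-- Each `u_i` is 1-Lipschitz on `[0,∞)`, and `e` and `f` are Lipschitz
continuous on `[0,∞)`. -/
theorem stmt_10 {r : ℕ} (hr : 1 ≤ r) (np : NetParams r)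
    (Q : Mat r) (hQ : IsRouting Q)
    (e f : ℝ → Mat r) (u : ℝ → Fin r → ℝ)
    (hsol : IsFluidSol np Q e f u) :
    (∀ i, ∀ s t : ℝ, 0 ≤ s → 0 ≤ t → |u t i - u s i| ≤ |t - s|) ∧
    ∃ L : ℝ, 0 < L ∧ ∀ i j, ∀ s t : ℝ, 0 ≤ s → 0 ≤ t →
      |e t i j - e s i j| ≤ L * |t - s| ∧ |f t i j - f s i j| ≤ L * |t - s| := by
  classical
  -- continuous global extensions of `e` and `f`
  set E : Fin r → Fin r → ℝ → ℝ := fun p q t => e (max t 0) p q with hEdef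
  set F : Fin r → Fin r → ℝ → ℝ := fun p q t => f (max t 0) p q with hFdef
  have hmax : ∀ t : ℝ, max t 0 ∈ Set.Ici (0:ℝ) := fun t => le_max_right t 0
  have hEc : ∀ p q, Continuous (E p q) := fun p q =>
    (hsol.cont_e p q).comp_continuous (continuous_id.max continuous_const) hmax
  have hFc : ∀ p q, Continuous (F p q) := fun p q =>
    (hsol.cont_f p q).comp_continuous (continuous_id.max continuous_const) hmax
  have hE01 : ∀ p q t, E p q t ∈ Set.Icc (0:ℝ) 1 := fun p q t =>
    (hsol.mem_T _ (le_max_right t 0)).1 p q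
  have hF01 : ∀ p q t, F p q t ∈ Set.Icc (0:ℝ) 1 := fun p q t =>
    (hsol.mem_T _ (le_max_right t 0)).2.1 p q
  have hEeq : ∀ p q (t : ℝ), 0 ≤ t → E p q t = e t p q := fun p q t ht => by
    simp only [hEdef, max_eq_left ht]
  have hFeq : ∀ p q (t : ℝ), 0 ≤ t → F p q t = f t p q := fun p q t ht => by
    simp only [hFdef, max_eq_left ht]
  have hIe : ∀ (p q : Fin r) (t : ℝ), 0 ≤ t →
      (∫ x in (0:ℝ)..t, e x p q) = ∫ x in (0:ℝ)..t, E p q x := by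
    intro p q t ht
    refine intervalIntegral.integral_congr fun x hx => ?_
    rw [Set.uIcc_of_le ht] at hx
    exact (hEeq p q x hx.1).symm
  have hIf : ∀ (p q : Fin r) (t : ℝ), 0 ≤ t →
      (∫ x in (0:ℝ)..t, f x p q) = ∫ x in (0:ℝ)..t, F p q x := by
    intro p q t ht
    refine intervalIntegral.integral_congr fun x hx => ?_
    rw [Set.uIcc_of_le ht] at hx
    exact (hFeq p q x hx.1).symm
  -- the key monotonicity estimate for `u`
  have key : ∀ i, ∀ s t : ℝ, 0 ≤ s → s ≤ t → u t i - u s i ≤ t - s := by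
    intro i
    obtain ⟨j, hj⟩ : ∃ j, 0 < np.P i j := by
      by_contra hcon
      push_neg at hcon
      have h0 : (∑ j, np.P i j) ≤ 0 := Finset.sum_nonpos fun j _ => hcon j
      rw [np.P_rowsum i] at h0; linarith
    have hcpos : 0 < np.lam i * np.P i j := mul_pos (np.lam_pos i) hj
    set G : ℝ → ℝ := fun t => t -
      (F i j t - F i j 0 + np.mu i j * ∫ x in (0:ℝ)..t, F i j x) / (np.lam i * np.P i j)
      with hGdef
    have hGc : Continuous G := by
      apply continuous_id.sub
      exact (((hFc i j).sub continuous_const).add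
        (continuous_const.mul (prim_cont _ (hFc i j)))).div_const _
    have hUG : ∀ t : ℝ, 0 ≤ t → u t i = G t := by
      intro t ht
      have h1 := hsol.eq_f i j t ht
      rw [hIf i j t ht, ← hFeq i j t ht, ← hFeq i j 0 le_rfl] at h1
      have h2 : F i j t - F i j 0 + np.mu i j * (∫ x in (0:ℝ)..t, F i j x)
          = (np.lam i * np.P i j) * (t - u t i) := by linarith
      simp only [hGdef, h2, mul_div_cancel_left₀ _ (ne_of_gt hcpos)]
      ring
    have hUmax : (fun t => u t i) = fun t => G (max t 0) := by
      funext x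
      rcases le_or_gt x 0 with h | h
      · rw [hsol.u_zero i x h, max_eq_right h, ← hUG 0 le_rfl, hsol.u_zero i 0 le_rfl]
      · rw [max_eq_left h.le, hUG x h.le]
    have hUcont : Continuous (fun t => u t i) := by
      rw [hUmax]; exact hGc.comp (continuous_id.max continuous_const)
    have hU : Monotone (fun t => u t i) := hsol.u_mono i
    have hsfF : ⇑(hU.stieltjesFunction) = fun t => u t i := by
      funext x
      rw [Monotone.stieltjesFunction_eq]
      exact rightLim_eq_of_tendsto
        ((hUcont.tendsto x).mono_left nhdsWithin_le_nhds)
    set A := lsMeasure (fun t => u t i) with hA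
    have hAeq : A = hU.stieltjesFunction.measure := by rw [hA, lsMeasure, dif_pos hU]
    have hIoc : ∀ a b : ℝ, A (Set.Ioc a b) = ENNReal.ofReal (u b i - u a i) := by
      intro a b
      rw [hAeq, StieltjesFunction.measure_Ioc]
      simp only [hsfF]
    have hatom : ∀ a : ℝ, A {a} = 0 := by
      intro a
      rw [hAeq, StieltjesFunction.measure_singleton]
      have hl : Function.leftLim (⇑hU.stieltjesFunction) a = u a i := by
        rw [hsfF]
        exact leftLim_eq_of_tendsto
          ((hUcont.tendsto a).mono_left nhdsWithin_le_nhds)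
      rw [hl]
      simp only [hsfF]
      simp
    -- complementarity
    have hcompl := hsol.compl i
    rw [← hA] at hcompl
    have hme : AEMeasurable (fun x => ENNReal.ofReal (e x i i)) (A.restrict (Set.Ici 0)) := by
      refine (Measurable.aemeasurable ((hEc i i).measurable.ennreal_ofReal)).congr ?_
      filter_upwards [ae_restrict_mem measurableSet_Ici] with x hx
      rw [hEeq i i x hx]
    have hae : (fun x => ENNReal.ofReal (e x i i)) =ᵐ[A.restrict (Set.Ici 0)] 0 :=
      (lintegral_eq_zero_iff' hme).mp hcompl
    have hzero : ∀ S : Set ℝ, MeasurableSet S → S ⊆ Set.Ici (0:ℝ) →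
        (∀ x ∈ S, 0 < e x i i) → A S = 0 := by
      intro S hSm hS0 hSpos
      have h1 : A.restrict (Set.Ici 0) {x | ENNReal.ofReal (e x i i) ≠ 0} = 0 := by
        have h2 := ae_iff.mp hae
        simpa using h2
      have h2 : S ⊆ {x | ENNReal.ofReal (e x i i) ≠ 0} := by
        intro x hx
        simp only [Set.mem_setOf_eq, ne_eq, ENNReal.ofReal_eq_zero, not_le]
        exact hSpos x hx
      have h3 : A.restrict (Set.Ici 0) S = 0 :=
        le_antisymm (h1 ▸ measure_mono h2) zero_le
      rw [Measure.restrict_apply hSm, Set.inter_eq_self_of_subset_left hS0] at h3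
      exact h3
    -- main argument
    intro s t hs hst
    have ht : (0:ℝ) ≤ t := hs.trans hst
    set Z : Set ℝ := {x | x ∈ Set.Icc s t ∧ E i i x = 0} with hZdef
    have hZclosed : IsClosed Z := by
      have : Z = Set.Icc s t ∩ (E i i) ⁻¹' {0} := rfl
      rw [this]
      exact isClosed_Icc.inter (isClosed_singleton.preimage (hEc i i))
    have hpos : ∀ x, x ∈ Set.Icc s t → x ∉ Z → 0 < e x i i := by
      intro x hx hxZ
      have hx0 : (0:ℝ) ≤ x := hs.trans hx.1
      have h1 : E i i x ≠ 0 := fun h => hxZ ⟨hx, h⟩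
      have h2 : 0 ≤ E i i x := (hE01 i i x).1
      rw [hEeq i i x hx0] at h1 h2
      exact lt_of_le_of_ne h2 (Ne.symm h1)
    by_cases hZne : Z.Nonempty
    · have hbddB : BddBelow Z := ⟨s, fun x hx => hx.1.1⟩
      have hbddA : BddAbove Z := ⟨t, fun x hx => hx.1.2⟩
      set a := sInf Z with hadef
      set b := sSup Z with hbdef
      have haZ : a ∈ Z := hZclosed.csInf_mem hZne hbddB
      have hbZ : b ∈ Z := hZclosed.csSup_mem hZne hbddA
      have hsa : s ≤ a := haZ.1.1
      have hbt : b ≤ t := hbZ.1.2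
      have hab : a ≤ b := csInf_le_csSup hZne hbddB hbddA
      have ha0 : (0:ℝ) ≤ a := hs.trans hsa
      have hb0 : (0:ℝ) ≤ b := ha0.trans hab
      -- u t ≤ u b
      have h1 : u t i - u b i ≤ 0 := by
        have hz : A (Set.Ioc b t) = 0 := by
          refine hzero _ measurableSet_Ioc (fun x hx => hb0.trans hx.1.le) ?_
          intro x hx
          refine hpos x ⟨(hsa.trans hab).trans hx.1.le, hx.2⟩ fun hxZ => ?_
          exact absurd (le_csSup hbddA hxZ) (not_le.mpr hx.1)
        rw [hIoc b t] at hz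
        exact (ENNReal.ofReal_eq_zero.mp hz)
      -- u a ≤ u s
      have h2 : u a i - u s i ≤ 0 := by
        rcases eq_or_lt_of_le hsa with h | h
        · rw [h]; simp
        · have hIoo : A (Set.Ioo s a) = 0 := by
            refine hzero _ measurableSet_Ioo (fun x hx => hs.trans hx.1.le) ?_
            intro x hx
            refine hpos x ⟨hx.1.le, hx.2.le.trans haZ.1.2⟩ fun hxZ => ?_
            exact absurd (csInf_le hbddB hxZ) (not_le.mpr hx.2)
          have hunion : Set.Ioc s a = Set.Ioo s a ∪ {a} := (Set.Ioo_union_right h).symm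
          have hz : A (Set.Ioc s a) = 0 := by
            rw [hunion]
            refine le_antisymm ((measure_union_le _ _).trans ?_) zero_le
            rw [hIoo, hatom a]; simp
          rw [hIoc s a] at hz
          exact (ENNReal.ofReal_eq_zero.mp hz)
      -- u b - u a ≤ b - a
      have h3 : u b i - u a i ≤ b - a := by
        have hea : e a i i = 0 := by rw [← hEeq i i a ha0]; exact haZ.2
        have heb : e b i i = 0 := by rw [← hEeq i i b hb0]; exact hbZ.2
        have Ha := hsol.eq_e_diag i a ha0
        have Hb := hsol.eq_e_diag i b hb0
        rw [hea] at Ha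
        rw [heb] at Hb
        have hS : (∑ k ∈ Finset.univ.filter (fun k => k ≠ i),
              np.mu k i * ∫ x in (0:ℝ)..a, e x k i)
            ≤ ∑ k ∈ Finset.univ.filter (fun k => k ≠ i),
              np.mu k i * ∫ x in (0:ℝ)..b, e x k i := by
          refine Finset.sum_le_sum fun k _ => ?_
          rw [hIe k i a ha0, hIe k i b hb0]
          exact mul_le_mul_of_nonneg_left
            (prim_mono _ (hEc k i) (fun x => (hE01 k i x).1) hab) (np.mu_pos k i).le
        have hT : (∑ k, np.mu k i * ∫ x in (0:ℝ)..a, f x k i)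
            ≤ ∑ k, np.mu k i * ∫ x in (0:ℝ)..b, f x k i := by
          refine Finset.sum_le_sum fun k _ => ?_
          rw [hIf k i a ha0, hIf k i b hb0]
          exact mul_le_mul_of_nonneg_left
            (prim_mono _ (hFc k i) (fun x => (hF01 k i x).1) hab) (np.mu_pos k i).le
        have hT' : Q i i * (∑ k, np.mu k i * ∫ x in (0:ℝ)..a, f x k i)
            ≤ Q i i * ∑ k, np.mu k i * ∫ x in (0:ℝ)..b, f x k i :=
          mul_le_mul_of_nonneg_left hT (hQ.1 i i)
        have h4 : np.lam i * (a - u a i) ≤ np.lam i * (b - u b i) := by linarith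
        have h5 : a - u a i ≤ b - u b i := le_of_mul_le_mul_left h4 (np.lam_pos i)
        linarith
      linarith
    · -- Z empty
      have hz : A (Set.Ioc s t) = 0 := by
        refine hzero _ measurableSet_Ioc (fun x hx => hs.trans hx.1.le) ?_
        intro x hx
        refine hpos x ⟨hx.1.le, hx.2⟩ fun hxZ => hZne ⟨x, hxZ⟩
      rw [hIoc s t] at hz
      have := ENNReal.ofReal_eq_zero.mp hz
      linarith
  -- Part 1
  have part1 : ∀ i, ∀ s t : ℝ, 0 ≤ s → 0 ≤ t → |u t i - u s i| ≤ |t - s| := by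
    intro i
    refine symm_reduce (fun x => u x i) (fun s t hs hst => ?_)
    rw [abs_of_nonneg (sub_nonneg.2 (hsol.u_mono i hst))]
    exact key i s t hs hst
  refine ⟨part1, ?_⟩
  -- Lipschitz bound for the "busy time" g_k(t) = t - u t k
  have hglip : ∀ k, ∀ s t : ℝ, 0 ≤ s → 0 ≤ t →
      |(t - u t k) - (s - u s k)| ≤ |t - s| := by
    intro k
    refine symm_reduce (fun x => x - u x k) (fun s t hs hst => ?_)
    have h1 := key k s t hs hst
    have h2 : 0 ≤ u t k - u s k := sub_nonneg.2 (hsol.u_mono k hst)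
    rw [abs_of_nonneg (by linarith)]
    linarith
  set Λ : ℝ := ∑ k, np.lam k with hΛdef
  set M : ℝ := ∑ p, ∑ q, np.mu p q with hMdef
  have hΛ0 : 0 ≤ Λ := Finset.sum_nonneg fun k _ => (np.lam_pos k).le
  have hM0 : 0 ≤ M := Finset.sum_nonneg fun p _ => Finset.sum_nonneg fun q _ => (np.mu_pos p q).le
  have hmu_le : ∀ q, (∑ p, np.mu p q) ≤ M := fun q =>
    Finset.sum_le_sum fun p _ =>
      Finset.single_le_sum (fun q' _ => (np.mu_pos p q').le) (Finset.mem_univ q)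
  have hmu1 : ∀ p q, np.mu p q ≤ M := fun p q =>
    le_trans (Finset.single_le_sum (fun p' _ => (np.mu_pos p' q).le) (Finset.mem_univ p))
      (hmu_le q)
  have hlamle : ∀ k, np.lam k ≤ Λ := fun k =>
    Finset.single_le_sum (fun k' _ => (np.lam_pos k').le) (Finset.mem_univ k)
  have hP1 : ∀ p q, np.P p q ≤ 1 := fun p q => by
    rw [← np.P_rowsum p]
    exact Finset.single_le_sum (fun k _ => np.P_nonneg p k) (Finset.mem_univ q)
  have hQ1 : ∀ p q, Q p q ≤ 1 := fun p q => by
    rw [← hQ.2 p]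
    exact Finset.single_le_sum (fun k _ => hQ.1 p k) (Finset.mem_univ q)
  refine ⟨1 + Λ + 2 * M, by linarith, ?_⟩
  intro i j s t hs ht
  -- bound for sums of integral differences
  have hsum_bound : ∀ (i' : Fin r) (S : Finset (Fin r)),
      |∑ k ∈ S, np.mu k i' * ((∫ x in (0:ℝ)..t, F k i' x) - ∫ x in (0:ℝ)..s, F k i' x)|
        ≤ M * |t - s| := by
    intro i' S
    calc |∑ k ∈ S, np.mu k i' * ((∫ x in (0:ℝ)..t, F k i' x) - ∫ x in (0:ℝ)..s, F k i' x)|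
        ≤ ∑ k ∈ S, |np.mu k i' *
            ((∫ x in (0:ℝ)..t, F k i' x) - ∫ x in (0:ℝ)..s, F k i' x)| :=
          Finset.abs_sum_le_sum_abs _ _
      _ ≤ ∑ k ∈ S, np.mu k i' * |t - s| := by
          refine Finset.sum_le_sum fun k _ => ?_
          rw [abs_mul, abs_of_nonneg (np.mu_pos k i').le, int_sub _ (hFc k i') s t]
          exact mul_le_mul_of_nonneg_left (int_abs_le _ (hF01 k i') s t) (np.mu_pos k i').le
      _ ≤ ∑ k, np.mu k i' * |t - s| := by
          refine Finset.sum_le_sum_of_subset_of_nonneg (Finset.subset_univ S)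
            fun k _ _ => mul_nonneg (np.mu_pos k i').le (abs_nonneg _)
      _ = (∑ k, np.mu k i') * |t - s| := by rw [Finset.sum_mul]
      _ ≤ M * |t - s| := mul_le_mul_of_nonneg_right (hmu_le i') (abs_nonneg _)
  have hsum_bound_e : ∀ (i' : Fin r) (S : Finset (Fin r)),
      |∑ k ∈ S, np.mu k i' * ((∫ x in (0:ℝ)..t, E k i' x) - ∫ x in (0:ℝ)..s, E k i' x)|
        ≤ M * |t - s| := by
    intro i' S
    calc |∑ k ∈ S, np.mu k i' * ((∫ x in (0:ℝ)..t, E k i' x) - ∫ x in (0:ℝ)..s, E k i' x)|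
        ≤ ∑ k ∈ S, |np.mu k i' *
            ((∫ x in (0:ℝ)..t, E k i' x) - ∫ x in (0:ℝ)..s, E k i' x)| :=
          Finset.abs_sum_le_sum_abs _ _
      _ ≤ ∑ k ∈ S, np.mu k i' * |t - s| := by
          refine Finset.sum_le_sum fun k _ => ?_
          rw [abs_mul, abs_of_nonneg (np.mu_pos k i').le, int_sub _ (hEc k i') s t]
          exact mul_le_mul_of_nonneg_left (int_abs_le _ (hE01 k i') s t) (np.mu_pos k i').le
      _ ≤ ∑ k, np.mu k i' * |t - s| := by
          refine Finset.sum_le_sum_of_subset_of_nonneg (Finset.subset_univ S)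
            fun k _ _ => mul_nonneg (np.mu_pos k i').le (abs_nonneg _)
      _ = (∑ k, np.mu k i') * |t - s| := by rw [Finset.sum_mul]
      _ ≤ M * |t - s| := mul_le_mul_of_nonneg_right (hmu_le i') (abs_nonneg _)
  constructor
  · -- e bound
    by_cases hij : i = j
    · subst hij
      have H1 := hsol.eq_e_diag i t ht
      have H2 := hsol.eq_e_diag i s hs
      have hrw : ∀ τ : ℝ, 0 ≤ τ →
          (∑ k ∈ Finset.univ.filter (fun k => k ≠ i), np.mu k i * ∫ x in (0:ℝ)..τ, e x k i)
            = ∑ k ∈ Finset.univ.filter (fun k => k ≠ i), np.mu k i * ∫ x in (0:ℝ)..τ, E k i x :=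
        fun τ hτ => Finset.sum_congr rfl fun k _ => by rw [hIe k i τ hτ]
      have hrwf : ∀ τ : ℝ, 0 ≤ τ →
          (∑ k, np.mu k i * ∫ x in (0:ℝ)..τ, f x k i)
            = ∑ k, np.mu k i * ∫ x in (0:ℝ)..τ, F k i x :=
        fun τ hτ => Finset.sum_congr rfl fun k _ => by rw [hIf k i τ hτ]
      rw [hrw t ht, hrwf t ht] at H1
      rw [hrw s hs, hrwf s hs] at H2
      have hdiff : e t i i - e s i i
          = -(np.lam i * ((t - u t i) - (s - u s i)))
            + (∑ k ∈ Finset.univ.filter (fun k => k ≠ i),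
                np.mu k i * ((∫ x in (0:ℝ)..t, E k i x) - ∫ x in (0:ℝ)..s, E k i x))
            + Q i i * ∑ k, np.mu k i *
                ((∫ x in (0:ℝ)..t, F k i x) - ∫ x in (0:ℝ)..s, F k i x) := by
        rw [H1, H2]
        simp only [Finset.sum_sub_distrib, mul_sub]
        ring
      calc |e t i i - e s i i|
          ≤ np.lam i * |(t - u t i) - (s - u s i)|
            + |∑ k ∈ Finset.univ.filter (fun k => k ≠ i),
                np.mu k i * ((∫ x in (0:ℝ)..t, E k i x) - ∫ x in (0:ℝ)..s, E k i x)|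
            + Q i i * |∑ k, np.mu k i *
                ((∫ x in (0:ℝ)..t, F k i x) - ∫ x in (0:ℝ)..s, F k i x)| := by
            rw [hdiff]
            exact abs_est3 _ _ _ _ _ (np.lam_pos i).le (hQ.1 i i)
        _ ≤ np.lam i * |t - s| + M * |t - s| + Q i i * (M * |t - s|) := by
            refine add_le_add (add_le_add
              (mul_le_mul_of_nonneg_left (hglip i s t hs ht) (np.lam_pos i).le)
              (hsum_bound_e i _))
              (mul_le_mul_of_nonneg_left (hsum_bound i _) (hQ.1 i i))
        _ ≤ (1 + Λ + 2 * M) * |t - s| := by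
            have hcoef : np.lam i + M + Q i i * M ≤ 1 + Λ + 2 * M := by
              have hq := mul_le_mul_of_nonneg_right (hQ1 i i) hM0
              have := hlamle i
              linarith
            calc np.lam i * |t - s| + M * |t - s| + Q i i * (M * |t - s|)
                = (np.lam i + M + Q i i * M) * |t - s| := by ring
              _ ≤ (1 + Λ + 2 * M) * |t - s| :=
                  mul_le_mul_of_nonneg_right hcoef (abs_nonneg _)
    · -- off-diagonal
      have H1 := hsol.eq_e_off i j hij t ht
      have H2 := hsol.eq_e_off i j hij s hs
      rw [hIe i j t ht] at H1
      rw [hIe i j s hs] at H2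
      have hrwf : ∀ τ : ℝ, 0 ≤ τ →
          (∑ k, np.mu k i * ∫ x in (0:ℝ)..τ, f x k i)
            = ∑ k, np.mu k i * ∫ x in (0:ℝ)..τ, F k i x :=
        fun τ hτ => Finset.sum_congr rfl fun k _ => by rw [hIf k i τ hτ]
      rw [hrwf t ht] at H1
      rw [hrwf s hs] at H2
      have hdiff : e t i j - e s i j
          = -(np.mu i j * ((∫ x in (0:ℝ)..t, E i j x) - ∫ x in (0:ℝ)..s, E i j x))
            + Q i j * ∑ k, np.mu k i *
                ((∫ x in (0:ℝ)..t, F k i x) - ∫ x in (0:ℝ)..s, F k i x) := by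
        rw [H1, H2]
        simp only [Finset.sum_sub_distrib, mul_sub]
        ring
      calc |e t i j - e s i j|
          ≤ np.mu i j * |(∫ x in (0:ℝ)..t, E i j x) - ∫ x in (0:ℝ)..s, E i j x|
            + Q i j * |∑ k, np.mu k i *
                ((∫ x in (0:ℝ)..t, F k i x) - ∫ x in (0:ℝ)..s, F k i x)| := by
            rw [hdiff]
            exact abs_est2 _ _ _ _ (np.mu_pos i j).le (hQ.1 i j)
        _ ≤ np.mu i j * |t - s| + Q i j * (M * |t - s|) := by
            refine add_le_add (mul_le_mul_of_nonneg_left ?_ (np.mu_pos i j).le)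
              (mul_le_mul_of_nonneg_left (hsum_bound i _) (hQ.1 i j))
            rw [int_sub _ (hEc i j) s t]
            exact int_abs_le _ (hE01 i j) s t
        _ ≤ (1 + Λ + 2 * M) * |t - s| := by
            have hcoef : np.mu i j + Q i j * M ≤ 1 + Λ + 2 * M := by
              have hq := mul_le_mul_of_nonneg_right (hQ1 i j) hM0
              have := hmu1 i j
              linarith
            calc np.mu i j * |t - s| + Q i j * (M * |t - s|)
                = (np.mu i j + Q i j * M) * |t - s| := by ring
              _ ≤ (1 + Λ + 2 * M) * |t - s| :=
                  mul_le_mul_of_nonneg_right hcoef (abs_nonneg _)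
  · -- f bound
    have H1 := hsol.eq_f i j t ht
    have H2 := hsol.eq_f i j s hs
    rw [hIf i j t ht] at H1
    rw [hIf i j s hs] at H2
    have hdiff : f t i j - f s i j
        = np.lam i * np.P i j * ((t - u t i) - (s - u s i))
          - np.mu i j * ((∫ x in (0:ℝ)..t, F i j x) - ∫ x in (0:ℝ)..s, F i j x) := by
      rw [H1, H2]; ring
    calc |f t i j - f s i j|
        ≤ np.lam i * np.P i j * |(t - u t i) - (s - u s i)|
          + np.mu i j * |(∫ x in (0:ℝ)..t, F i j x) - ∫ x in (0:ℝ)..s, F i j x| := by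
          rw [hdiff]
          exact abs_estf _ _ _ _
            (mul_nonneg (np.lam_pos i).le (np.P_nonneg i j)) (np.mu_pos i j).le
      _ ≤ np.lam i * np.P i j * |t - s| + np.mu i j * |t - s| := by
          refine add_le_add (mul_le_mul_of_nonneg_left (hglip i s t hs ht)
            (mul_nonneg (np.lam_pos i).le (np.P_nonneg i j)))
            (mul_le_mul_of_nonneg_left ?_ (np.mu_pos i j).le)
          rw [int_sub _ (hFc i j) s t]
          exact int_abs_le _ (hF01 i j) s t
      _ ≤ (1 + Λ + 2 * M) * |t - s| := by
          have hcoef : np.lam i * np.P i j + np.mu i j ≤ 1 + Λ + 2 * M := by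
            have h1 : np.lam i * np.P i j ≤ np.lam i * 1 :=
              mul_le_mul_of_nonneg_left (hP1 i j) (np.lam_pos i).le
            have h2 := hmu1 i j
            have h3 := hlamle i
            linarith
          calc np.lam i * np.P i j * |t - s| + np.mu i j * |t - s|
              = (np.lam i * np.P i j + np.mu i j) * |t - s| := by ring
            _ ≤ (1 + Λ + 2 * M) * |t - s| :=
                mul_le_mul_of_nonneg_right hcoef (abs_nonneg _)
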